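/- Let a be a real number. As z = x + iy → a in ℂ, the expansion B_0(z) B_1(z) − conj(A_0(z)) A_1(z) = 2i (A_1(a)² − A_0(a) A_2(a)) y + o(|z − a|) holds; that is, (B_0(z)B_1(z) − conj(A_0(z))A_1(z) − 2i(A_1(a)² − A_0(a)A_2(a)) y) / |z − a| → 0 as z → a. -/

import Mathlib

open Complex Finset Filter Topology

/-- **(Vanderbei, proof of Lemma 2.)** Near a real point `a`, the expansion
`B₀(z)B₁(z) − conj(A₀(z))A₁(z) = 2i (A₁(a)² − A₀(a)A₂(a)) y + o(|z−a|)` holds, `y = Im z`. -/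
theorem numerator_expansion
    {n : ℕ} (f : Fin (n + 1) → ℂ → ℂ)
    (hf_entire : ∀ j, Differentiable ℂ (f j))
    (hf_real : ∀ j, ∀ x : ℝ, (f j (x : ℂ)).im = 0)
    (A0 A1 A2 B1 : ℂ → ℂ) (B0 : ℂ → ℝ)
    (hA0 : ∀ z, A0 z = ∑ j, (f j z) ^ 2)
    (hA1 : ∀ z, A1 z = ∑ j, f j z * deriv (f j) z)
    (hA2 : ∀ z, A2 z = ∑ j, (deriv (f j) z) ^ 2)
    (hB1 : ∀ z, B1 z = ∑ j, (starRingEnd ℂ) (f j z) * deriv (f j) z)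
    (hB0 : ∀ z, B0 z = ∑ j, ‖f j z‖ ^ 2)
    (a : ℝ) :
    Tendsto
      (fun z : ℂ =>
        (((B0 z : ℂ) * B1 z - (starRingEnd ℂ) (A0 z) * A1 z
            - 2 * I * ((A1 (a : ℂ)) ^ 2 - A0 (a : ℂ) * A2 (a : ℂ)) * (z.im : ℂ))
          / (‖z - (a : ℂ)‖ : ℝ)))
      (𝓝[{(a : ℂ)}ᶜ] (a : ℂ)) (𝓝 0) := by
  have hf2 : ∀ j, Differentiable ℂ (deriv (f j)) := by
    intro j
    have h := (hf_entire j).contDiff (n := ((⊤ : ℕ∞) : WithTop ℕ∞))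
    rw [contDiff_infty_iff_deriv] at h
    exact h.2.differentiable (by simp)
  set p : Fin (n+1) → ℂ := fun j => f j ↑a with hp_def
  set d : Fin (n+1) → ℂ := fun j => deriv (f j) ↑a with hd_def
  set s : Fin (n+1) → ℂ := fun j => deriv (deriv (f j)) ↑a with hs_def
  have hpe : ∀ x, f x (↑a : ℂ) = p x := fun _ => rfl
  have hde : ∀ x, deriv (f x) (↑a : ℂ) = d x := fun _ => rfl
  have hpre : ∀ j, (starRingEnd ℂ) (p j) = p j := fun j =>
    Complex.conj_eq_iff_im.2 (hf_real j a)
  have hdre : ∀ j, (starRingEnd ℂ) (d j) = d j := by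
    intro j
    rw [Complex.conj_eq_iff_im]
    have h1 : HasDerivAt (fun t : ℝ => f j ↑t) (d j) a :=
      ((hf_entire j).differentiableAt.hasDerivAt).comp_ofReal
    have h2 : HasDerivAt (fun t : ℝ => (f j ↑t).im) (d j).im a :=
      (Complex.imCLM.hasFDerivAt.comp_hasDerivAt a h1)
    simp only [hf_real j] at h2
    exact h2.unique (hasDerivAt_const a 0)
  -- real Fréchet derivatives of the building blocks
  have hu : ∀ j, HasFDerivAt (f j) (d j • ContinuousLinearMap.id ℝ ℂ) ↑a := by
    intro j
    have h := ((hf_entire j).differentiableAt.hasDerivAt (x := (↑a : ℂ))).hasFDerivAt.restrictScalars ℝ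
    refine h.congr_fderiv ?_
    ext v
    simp [smul_eq_mul, mul_comm, hd_def]
  have hw : ∀ j, HasFDerivAt (deriv (f j)) (s j • ContinuousLinearMap.id ℝ ℂ) ↑a := by
    intro j
    have h := ((hf2 j).differentiableAt.hasDerivAt (x := (↑a : ℂ))).hasFDerivAt.restrictScalars ℝ
    refine h.congr_fderiv ?_
    ext v
    simp [smul_eq_mul, mul_comm, hs_def]
  have hcu : ∀ j, HasFDerivAt (fun z => (starRingEnd ℂ) (f j z))
      (d j • (Complex.conjCLE : ℂ →L[ℝ] ℂ)) ↑a := by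
    intro j
    have h2 : HasFDerivAt (fun z => (starRingEnd ℂ) (f j z))
        ((Complex.conjCLE : ℂ →L[ℝ] ℂ).comp (d j • ContinuousLinearMap.id ℝ ℂ)) ↑a :=
      ((Complex.conjCLE : ℂ →L[ℝ] ℂ).hasFDerivAt.comp (↑a : ℂ) (hu j))
    apply h2.congr_fderiv
    ext v
    simp only [ContinuousLinearMap.coe_comp', Function.comp_apply,
      ContinuousLinearMap.coe_smul', Pi.smul_apply, ContinuousLinearMap.id_apply,
      smul_eq_mul, ContinuousLinearEquiv.coe_coe, Complex.conjCLE_apply, map_mul, hdre j]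
  set C : ℂ := A1 ↑a ^ 2 - A0 ↑a * A2 ↑a with hC_def
  set L : ℂ →L[ℝ] ℂ := (2 * I * C) • (Complex.ofRealCLM.comp Complex.imCLM) with hL_def
  have hG0 : HasFDerivAt (fun z => ∑ j, (starRingEnd ℂ) (f j z) * f j z)
      (∑ j, ((starRingEnd ℂ) (p j) • (d j • ContinuousLinearMap.id ℝ ℂ)
        + p j • (d j • (Complex.conjCLE : ℂ →L[ℝ] ℂ)))) ↑a :=
    HasFDerivAt.fun_sum fun j _ => (hcu j).mul (hu j)
  have hG1 : HasFDerivAt (fun z => ∑ j, (starRingEnd ℂ) (f j z) * deriv (f j) z)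
      (∑ j, ((starRingEnd ℂ) (p j) • (s j • ContinuousLinearMap.id ℝ ℂ)
        + d j • (d j • (Complex.conjCLE : ℂ →L[ℝ] ℂ)))) ↑a :=
    HasFDerivAt.fun_sum fun j _ => (hcu j).mul (hw j)
  have hG2 : HasFDerivAt (fun z => ∑ j, ((starRingEnd ℂ) (f j z)) * ((starRingEnd ℂ) (f j z)))
      (∑ j, ((starRingEnd ℂ) (p j) • (d j • (Complex.conjCLE : ℂ →L[ℝ] ℂ))
        + (starRingEnd ℂ) (p j) • (d j • (Complex.conjCLE : ℂ →L[ℝ] ℂ)))) ↑a :=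
    HasFDerivAt.fun_sum fun j _ => (hcu j).mul (hcu j)
  have hG3 : HasFDerivAt (fun z => ∑ j, f j z * deriv (f j) z)
      (∑ j, (p j • (s j • ContinuousLinearMap.id ℝ ℂ)
        + d j • (d j • ContinuousLinearMap.id ℝ ℂ))) ↑a :=
    HasFDerivAt.fun_sum fun j _ => (hu j).mul (hw j)
  have hFd := (hG0.mul hG1).sub (hG2.mul hG3)
  have fac : ∀ (g h g' h' : Fin (n+1) → ℂ) (c c' : ℂ),
      (∑ x, (g x * (h x * c) + g' x * (h' x * c'))) =
      (∑ x, g x * h x) * c + (∑ x, g' x * h' x) * c' := by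
    intro g h g' h' c c'
    rw [Finset.sum_add_distrib, Finset.sum_mul, Finset.sum_mul]
    congr 1 <;> exact Finset.sum_congr rfl fun x _ => by ring
  have hconj : ∀ v : ℂ, (starRingEnd ℂ) v = v - 2 * (v.im : ℂ) * I := by
    intro v
    have := Complex.sub_conj v
    push_cast at this ⊢
    linear_combination -this
  have key : HasFDerivAt
      (fun z => (∑ j, (starRingEnd ℂ) (f j z) * f j z) * (∑ j, (starRingEnd ℂ) (f j z) * deriv (f j) z)
        - (∑ j, ((starRingEnd ℂ) (f j z)) * ((starRingEnd ℂ) (f j z))) * (∑ j, f j z * deriv (f j) z))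
      L ↑a := by
    apply hFd.congr_fderiv
    ext v
    simp only [ContinuousLinearMap.coe_sub', ContinuousLinearMap.add_apply, Pi.sub_apply,
      ContinuousLinearMap.coe_smul', Pi.smul_apply, ContinuousLinearMap.sum_apply,
      ContinuousLinearMap.coe_comp', Function.comp_apply, ContinuousLinearMap.id_apply,
      smul_eq_mul, ContinuousLinearEquiv.coe_coe, Complex.conjCLE_apply,
      Complex.ofRealCLM_apply, Complex.imCLM_apply, hpre, hdre, hpe, hde,
      hL_def, hC_def, hA0, hA1, hA2]
    rw [fac p s d d, fac p d p d, fac p s d d, fac p d p d, hconj v]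
    simp only [pow_two, hpe, hde]
    ring
  -- value of the function at a is 0
  have hF0 : (∑ j, (starRingEnd ℂ) (f j ↑a) * f j ↑a) * (∑ j, (starRingEnd ℂ) (f j ↑a) * deriv (f j) ↑a)
      - (∑ j, ((starRingEnd ℂ) (f j ↑a)) * ((starRingEnd ℂ) (f j ↑a))) * (∑ j, f j ↑a * deriv (f j) ↑a)
      = 0 := by
    simp only [hpe, hde, hpre]
    ring
  have hlo := key.isLittleO
  have heq : (fun z : ℂ => (∑ j, (starRingEnd ℂ) (f j z) * f j z) * (∑ j, (starRingEnd ℂ) (f j z) * deriv (f j) z)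
        - (∑ j, ((starRingEnd ℂ) (f j z)) * ((starRingEnd ℂ) (f j z))) * (∑ j, f j z * deriv (f j) z)
        - ((∑ j, (starRingEnd ℂ) (f j ↑a) * f j ↑a) * (∑ j, (starRingEnd ℂ) (f j ↑a) * deriv (f j) ↑a)
          - (∑ j, ((starRingEnd ℂ) (f j ↑a)) * ((starRingEnd ℂ) (f j ↑a))) * (∑ j, f j ↑a * deriv (f j) ↑a))
        - L (z - ↑a))
      = fun z : ℂ =>
        ((B0 z : ℂ) * B1 z - (starRingEnd ℂ) (A0 z) * A1 z
            - 2 * I * ((A1 (↑a : ℂ)) ^ 2 - A0 (↑a : ℂ) * A2 (↑a : ℂ)) * (z.im : ℂ)) := by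
    funext z
    rw [hF0]
    have hb0 : ((B0 z : ℝ) : ℂ) = ∑ j, (starRingEnd ℂ) (f j z) * f j z := by
      rw [hB0]
      push_cast
      refine Finset.sum_congr rfl fun j _ => ?_
      rw [← Complex.ofReal_pow, Complex.sq_norm, ← Complex.mul_conj, mul_comm]
    have ha0 : (starRingEnd ℂ) (A0 z) = ∑ j, ((starRingEnd ℂ) (f j z)) * ((starRingEnd ℂ) (f j z)) := by
      rw [hA0, map_sum]
      exact Finset.sum_congr rfl fun j _ => by rw [pow_two, map_mul]
    have hLz : L (z - ↑a) = 2 * I * C * (z.im : ℂ) := by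
      rw [hL_def]
      simp [Complex.sub_im, Complex.ofReal_im, mul_comm, smul_eq_mul]
    rw [hb0, ha0, hB1, hA1, hLz, hC_def]
    ring
  rw [heq] at hlo
  have hbig : (fun z : ℂ => z - ↑a) =O[𝓝 (↑a : ℂ)]
      (fun z : ℂ => ((‖z - ↑a‖ : ℝ) : ℂ)) := by
    apply Asymptotics.isBigO_of_le
    intro z
    simp
  have ht := (hlo.trans_isBigO hbig).tendsto_div_nhds_zero
  exact ht.mono_left nhdsWithin_le_nhds
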